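/- (Strong duality in the smoothing certification problem for a fixed shift.) Let π₀ be a probability density on ℝ^d, π_δ its translate by a fixed δ, and p₀ ∈ (0,1). Then min over measurable f: ℝ^d → [0,1] with E_{π₀}[f] = p₀ of E_{π_δ}[f] equals max over λ ∈ ℝ of (λp₀ − ∫ (λπ₀(z) − π_δ(z))₊ dz). -/

import Mathlib

open MeasureTheory Set Filter Topology

/-- Strong duality for the smoothing certification problem at a fixed shift:
the minimum of `E_{π_δ}[f]` over measurable `f : ℝ^d → [0,1]` with `E_{π₀}[f] = p₀`
equals the maximum over `λ ∈ ℝ` of `λ p₀ - ∫ (λ π₀ - π_δ)₊`. -/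
theorem stmt_4 {d : ℕ} (π₀ : (Fin d → ℝ) → ℝ)
    (hmeas : Measurable π₀) (hpos : ∀ z, 0 ≤ π₀ z)
    (hint : Integrable π₀) (hprob : ∫ z, π₀ z = 1)
    (δ : Fin d → ℝ) (p₀ : ℝ) (hp₀ : p₀ ∈ Ioo (0:ℝ) 1) :
    ∃ L : ℝ,
      IsLeast
        {v : ℝ | ∃ f : (Fin d → ℝ) → ℝ, Measurable f ∧ (∀ z, f z ∈ Icc (0:ℝ) 1) ∧
          (∫ z, f z * π₀ z) = p₀ ∧ v = ∫ z, f z * π₀ (z - δ)} L ∧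
      IsGreatest
        {v : ℝ | ∃ lam : ℝ, v = lam * p₀ - ∫ z, max (lam * π₀ z - π₀ (z - δ)) 0} L := by
  classical
  set q : (Fin d → ℝ) → ℝ := fun z => π₀ (z - δ) with hq_def
  have hq_meas : Measurable q := hmeas.comp (measurable_id.sub measurable_const)
  have hq_pos : ∀ z, 0 ≤ q z := fun z => hpos _
  have hq_int : Integrable q := hint.comp_sub_right δ
  -- integrability of products with [0,1]-valued measurable functions
  have hmul_int : ∀ (f g : (Fin d → ℝ) → ℝ), Measurable f → (∀ z, f z ∈ Icc (0:ℝ) 1) →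
      Measurable g → (∀ z, 0 ≤ g z) → Integrable g → Integrable (fun z => f z * g z) := by
    intro f g hf hf01 hg hg0 hgi
    refine hgi.mono' (hf.mul hg).aestronglyMeasurable (ae_of_all _ fun z => ?_)
    rw [Real.norm_eq_abs, abs_mul, abs_of_nonneg (hf01 z).1, abs_of_nonneg (hg0 z)]
    nlinarith [(hf01 z).1, (hf01 z).2, hg0 z]
  -- key linear identity
  have hkey : ∀ (f : (Fin d → ℝ) → ℝ) (lam : ℝ), Measurable f → (∀ z, f z ∈ Icc (0:ℝ) 1) →
      (∫ z, f z * π₀ z) = p₀ →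
      ∫ z, f z * q z = lam * p₀ - ∫ z, f z * (lam * π₀ z - q z) := by
    intro f lam hf hf01 hfp
    have h1 : Integrable fun z => f z * π₀ z := hmul_int f π₀ hf hf01 hmeas hpos hint
    have h2 : Integrable fun z => f z * q z := hmul_int f q hf hf01 hq_meas hq_pos hq_int
    have h3 : ∫ z, f z * (lam * π₀ z - q z)
        = lam * (∫ z, f z * π₀ z) - ∫ z, f z * q z := by
      rw [← integral_const_mul, ← integral_sub (h1.const_mul lam) h2]
      apply integral_congr_ae
      filter_upwards with z
      ring
    rw [h3, hfp]; ring
  -- weak duality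
  have hweak : ∀ (f : (Fin d → ℝ) → ℝ) (lam : ℝ), Measurable f → (∀ z, f z ∈ Icc (0:ℝ) 1) →
      (∫ z, f z * π₀ z) = p₀ →
      lam * p₀ - (∫ z, max (lam * π₀ z - q z) 0) ≤ ∫ z, f z * q z := by
    intro f lam hf hf01 hfp
    rw [hkey f lam hf hf01 hfp]
    have h1 : Integrable fun z => f z * π₀ z := hmul_int f π₀ hf hf01 hmeas hpos hint
    have h2 : Integrable fun z => f z * q z := hmul_int f q hf hf01 hq_meas hq_pos hq_int
    have ht_int : Integrable fun z => lam * π₀ z - q z := (hint.const_mul lam).sub hq_int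
    have hft_int : Integrable fun z => f z * (lam * π₀ z - q z) := by
      have : (fun z => f z * (lam * π₀ z - q z))
          = fun z => lam * (f z * π₀ z) - f z * q z := by funext z; ring
      rw [this]; exact (h1.const_mul lam).sub h2
    have hle : ∫ z, f z * (lam * π₀ z - q z) ≤ ∫ z, max (lam * π₀ z - q z) 0 := by
      refine integral_mono hft_int ht_int.pos_part fun z => ?_
      rcases le_or_gt (lam * π₀ z - q z) 0 with ht | ht
      · have : f z * (lam * π₀ z - q z) ≤ 0 := mul_nonpos_of_nonneg_of_nonpos (hf01 z).1 ht
        simpa [max_eq_right ht] using this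
      · have : f z * (lam * π₀ z - q z) ≤ 1 * (lam * π₀ z - q z) :=
          mul_le_mul_of_nonneg_right (hf01 z).2 ht.le
        simpa [max_eq_left ht.le] using this
    linarith
  -- the likelihood-ratio region machinery
  set A : ℝ → Set (Fin d → ℝ) := fun l => {z | q z < l * π₀ z} with hA_def
  have hA : ∀ l, MeasurableSet (A l) := fun l =>
    measurableSet_lt hq_meas (measurable_const.mul hmeas)
  set φ : ℝ → ℝ := fun l => ∫ z in A l, π₀ z with hφ_def
  have hAmono : Monotone A := by
    intro a b hab z hz
    exact lt_of_lt_of_le hz (mul_le_mul_of_nonneg_right hab (hpos z))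
  have hφmono : Monotone φ := fun a b hab =>
    setIntegral_mono_set hint.integrableOn (ae_of_all _ fun z => hpos z)
      (HasSubset.Subset.eventuallyLE (hAmono hab))
  set S : Set ℝ := {l | φ l ≤ p₀} with hS_def
  have h0S : (0:ℝ) ∈ S := by
    have hA0 : A 0 = ∅ := by
      ext z; simp only [hA_def, mem_setOf_eq, mem_empty_iff_false, iff_false, not_lt, zero_mul]
      exact hq_pos z
    have : φ 0 = 0 := by rw [hφ_def]; simp [hA0]
    simp only [hS_def, mem_setOf_eq, this]
    exact hp₀.1.le
  -- φ tends to 1 along ℕ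
  have hUnat : ⋃ n : ℕ, A n = {z | 0 < π₀ z} := by
    ext z
    simp only [mem_iUnion, hA_def, mem_setOf_eq]
    constructor
    · rintro ⟨n, hn⟩
      rcases (hpos z).lt_or_eq with h | h
      · exact h
      · exfalso; rw [← h] at hn; simp at hn; linarith [hq_pos z]
    · intro hz
      obtain ⟨n, hn⟩ := exists_nat_gt (q z / π₀ z)
      exact ⟨n, (div_lt_iff₀ hz).mp hn⟩
  have hsupp : ∫ z in {z | 0 < π₀ z}, π₀ z = 1 := by
    rw [← integral_indicator (measurableSet_lt measurable_const hmeas), ← hprob]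
    apply integral_congr_ae
    filter_upwards with z
    by_cases h : 0 < π₀ z
    · simp [indicator_of_mem, h]
    · have : π₀ z = 0 := le_antisymm (not_lt.mp h) (hpos z)
      simp [indicator, h, this]
  have hbig : ∃ n : ℕ, p₀ < φ n := by
    have htend : Tendsto (fun n : ℕ => φ n) atTop (𝓝 1) := by
      have := tendsto_setIntegral_of_monotone (fun n : ℕ => hA n)
        (fun a b hab => hAmono (Nat.cast_le.mpr hab)) (f := π₀) hint.integrableOn
      rwa [hUnat, hsupp] at this
    exact (htend.eventually (eventually_gt_nhds hp₀.2)).exists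
  obtain ⟨n₀, hn₀⟩ := hbig
  have hSbdd : BddAbove S := by
    refine ⟨n₀, fun l hl => ?_⟩
    by_contra h
    push_neg at h
    exact absurd ((hφmono h.le).trans hl) (not_le.mpr hn₀)
  have hSne : S.Nonempty := ⟨0, h0S⟩
  set lam : ℝ := sSup S with hlam_def
  have hlt : ∀ l < lam, φ l ≤ p₀ := by
    intro l hl
    obtain ⟨s, hs, hls⟩ := exists_lt_of_lt_csSup hSne hl
    exact (hφmono hls.le).trans hs
  have hgt : ∀ l, lam < l → p₀ < φ l := by
    intro l hl
    by_contra h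
    push_neg at h
    exact absurd (le_csSup hSbdd h) (not_le.mpr hl)
  -- left continuity at lam
  have hUL : ⋃ n : ℕ, A (lam - 1/((n:ℝ)+1)) = A lam := by
    ext z
    simp only [mem_iUnion, hA_def, mem_setOf_eq]
    constructor
    · rintro ⟨n, hn⟩
      have h1 : (0:ℝ) < 1/((n:ℝ)+1) := by positivity
      refine lt_of_lt_of_le hn (mul_le_mul_of_nonneg_right (by linarith) (hpos z))
    · intro hz
      have hπ : 0 < π₀ z := by
        rcases (hpos z).lt_or_eq with h | h
        · exact h
        · exfalso; rw [← h] at hz; simp at hz; linarith [hq_pos z]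
      obtain ⟨n, hn⟩ := exists_nat_one_div_lt
        (show (0:ℝ) < (lam * π₀ z - q z) / π₀ z from div_pos (by linarith) hπ)
      refine ⟨n, ?_⟩
      have := (lt_div_iff₀ hπ).mp hn
      nlinarith
  have hmonoL : Monotone fun n : ℕ => A (lam - 1/((n:ℝ)+1)) := by
    intro a b hab
    apply hAmono
    have : 1/((b:ℝ)+1) ≤ 1/((a:ℝ)+1) := by
      apply one_div_le_one_div_of_le (by positivity)
      exact_mod_cast Nat.add_le_add_right hab 1
    linarith
  have hφle : φ lam ≤ p₀ := by
    have htend : Tendsto (fun n : ℕ => φ (lam - 1/((n:ℝ)+1))) atTop (𝓝 (φ lam)) := by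
      have := tendsto_setIntegral_of_monotone (fun n : ℕ => hA _) hmonoL
        (f := π₀) hint.integrableOn
      rwa [hUL] at this
    refine le_of_tendsto htend (Eventually.of_forall fun n => hlt _ ?_)
    have : (0:ℝ) < 1/((n:ℝ)+1) := by positivity
    linarith
  -- right limit at lam
  set C : Set (Fin d → ℝ) := {z | q z ≤ lam * π₀ z ∧ 0 < π₀ z} with hC_def
  have hC : MeasurableSet C :=
    (measurableSet_le hq_meas (measurable_const.mul hmeas)).inter
      (measurableSet_lt measurable_const hmeas)
  set ψ : ℝ := ∫ z in C, π₀ z with hψ_def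
  have hIC : ⋂ n : ℕ, A (lam + 1/((n:ℝ)+1)) = C := by
    ext z
    simp only [mem_iInter, hA_def, hC_def, mem_setOf_eq]
    constructor
    · intro h
      have hπ : 0 < π₀ z := by
        rcases (hpos z).lt_or_eq with hh | hh
        · exact hh
        · exfalso
          have := h 0
          rw [← hh] at this; simp at this; linarith [hq_pos z]
      constructor
      · by_contra hcon
        push_neg at hcon
        obtain ⟨n, hn⟩ := exists_nat_one_div_lt
          (show (0:ℝ) < (q z - lam * π₀ z) / π₀ z from div_pos (by linarith) hπ)
        have h2 := (lt_div_iff₀ hπ).mp hn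
        have := h n
        nlinarith
      · exact hπ
    · rintro ⟨hle, hπ⟩ n
      have h1 : (0:ℝ) < 1/((n:ℝ)+1) := by positivity
      nlinarith
  have hantiR : Antitone fun n : ℕ => A (lam + 1/((n:ℝ)+1)) := by
    intro a b hab
    apply hAmono
    have : 1/((b:ℝ)+1) ≤ 1/((a:ℝ)+1) := by
      apply one_div_le_one_div_of_le (by positivity)
      exact_mod_cast Nat.add_le_add_right hab 1
    linarith
  have hψge : p₀ ≤ ψ := by
    have htend : Tendsto (fun n : ℕ => φ (lam + 1/((n:ℝ)+1))) atTop (𝓝 ψ) := by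
      have := tendsto_setIntegral_of_antitone (fun n : ℕ => hA _) hantiR
        (f := π₀) ⟨0, hint.integrableOn⟩
      rwa [hIC] at this
    refine ge_of_tendsto htend (Eventually.of_forall fun n => (hgt _ ?_).le)
    have : (0:ℝ) < 1/((n:ℝ)+1) := by positivity
    linarith
  -- boundary set and randomization
  have hAC : A lam ⊆ C := by
    intro z hz
    have hz' : q z < lam * π₀ z := hz
    have hπ : 0 < π₀ z := by
      rcases (hpos z).lt_or_eq with h | h
      · exact h
      · exfalso; rw [← h] at hz'; simp only [mul_zero] at hz'
        linarith [hq_pos z]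
    exact ⟨le_of_lt hz', hπ⟩
  set B : Set (Fin d → ℝ) := C \ A lam with hB_def
  have hB : MeasurableSet B := hC.diff (hA lam)
  have hBint : ∫ z in B, π₀ z = ψ - φ lam :=
    integral_diff (hA lam) hint.integrableOn hAC
  set γ : ℝ := if ψ - φ lam = 0 then 0 else (p₀ - φ lam) / (ψ - φ lam) with hγ_def
  have hγ0 : 0 ≤ γ := by
    rw [hγ_def]
    split_ifs with h
    · exact le_rfl
    · exact div_nonneg (by linarith) (by linarith)
  have hγ1 : γ ≤ 1 := by
    rw [hγ_def]
    split_ifs with h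
    · linarith
    · exact (div_le_one (lt_of_le_of_ne (by linarith) (Ne.symm h))).mpr (by linarith)
  have hγeq : φ lam + γ * (ψ - φ lam) = p₀ := by
    rw [hγ_def]
    split_ifs with h
    · have : ψ = φ lam := by linarith
      rw [this] at hψge
      linarith
    · field_simp
      ring
  -- the optimal test
  set f₀ : (Fin d → ℝ) → ℝ :=
    fun z => if z ∈ A lam then 1 else if z ∈ B then γ else 0 with hf₀_def
  have hf₀m : Measurable f₀ :=
    Measurable.ite (hA lam) measurable_const
      (Measurable.ite hB measurable_const measurable_const)
  have hf₀01 : ∀ z, f₀ z ∈ Icc (0:ℝ) 1 := by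
    intro z
    rw [hf₀_def]
    dsimp only
    split_ifs
    · exact ⟨zero_le_one, le_refl 1⟩
    · exact ⟨hγ0, hγ1⟩
    · exact ⟨le_refl 0, zero_le_one⟩
  have hf₀p : ∫ z, f₀ z * π₀ z = p₀ := by
    have hpt : ∀ z, f₀ z * π₀ z
        = (A lam).indicator π₀ z + γ * B.indicator π₀ z := by
      intro z
      rw [hf₀_def]
      dsimp only
      by_cases hza : z ∈ A lam
      · have hzb : z ∉ B := fun hb => hb.2 hza
        simp [hza, hzb, indicator_of_mem, indicator_of_notMem]
      · by_cases hzb : z ∈ B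
        · simp [hza, hzb, indicator_of_mem, indicator_of_notMem]
        · simp [hza, hzb, indicator_of_notMem]
    have hiA : Integrable ((A lam).indicator π₀) := hint.indicator (hA lam)
    have hiB : Integrable (B.indicator π₀) := hint.indicator hB
    calc ∫ z, f₀ z * π₀ z
        = ∫ z, ((A lam).indicator π₀ z + γ * B.indicator π₀ z) := by
          exact integral_congr_ae (ae_of_all _ hpt)
      _ = (∫ z, (A lam).indicator π₀ z) + γ * ∫ z, B.indicator π₀ z := by
          rw [integral_add hiA (hiB.const_mul γ), integral_const_mul]
      _ = φ lam + γ * (ψ - φ lam) := by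
          rw [integral_indicator (hA lam), integral_indicator hB, hBint]
      _ = p₀ := hγeq
  -- complementary slackness
  have hslack : ∫ z, f₀ z * (lam * π₀ z - q z) = ∫ z, max (lam * π₀ z - q z) 0 := by
    apply integral_congr_ae
    filter_upwards with z
    by_cases hza : z ∈ A lam
    · have ht : 0 < lam * π₀ z - q z := by
        have := hza
        simp only [hA_def, mem_setOf_eq] at this
        linarith
      rw [hf₀_def]
      simp [hza, max_eq_left ht.le]
    · by_cases hzb : z ∈ B
      · have ht : lam * π₀ z - q z = 0 := by
          have h1 : q z ≤ lam * π₀ z := hzb.1.1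
          have h2 : ¬ q z < lam * π₀ z := hza
          push_neg at h2
          linarith
        rw [hf₀_def]
        simp [hza, hzb, ht]
      · have ht : lam * π₀ z - q z ≤ 0 := by
          have h2 : ¬ q z < lam * π₀ z := hza
          push_neg at h2
          linarith
        rw [hf₀_def]
        simp [hza, hzb, max_eq_right ht]
  set L : ℝ := ∫ z, f₀ z * q z with hL_def
  have hLdual : L = lam * p₀ - ∫ z, max (lam * π₀ z - q z) 0 := by
    rw [hL_def, hkey f₀ lam hf₀m hf₀01 hf₀p, hslack]
  refine ⟨L, ⟨⟨f₀, hf₀m, hf₀01, hf₀p, rfl⟩, ?_⟩, ⟨⟨lam, hLdual⟩, ?_⟩⟩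
  · rintro v ⟨f, hfm, hfi, hfp, rfl⟩
    rw [hLdual]
    exact hweak f lam hfm hfi hfp
  · rintro v ⟨l, rfl⟩
    exact hweak f₀ l hf₀m hf₀01 hf₀p
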